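/- Let (R,d) be a dg-Noetherian differential graded ring, i.e., every ascending chain of dg-ideals stabilizes. Then dgnil(R,d), the sum of all nilpotent two-sided dg-ideals, is itself a nilpotent dg-ideal. -/

import Mathlib

/-- A differential making a `ℤ`-graded ring into a differential graded ring:
an additive endomorphism of degree `1`, of square zero, satisfying the
(signed) Leibniz rule on homogeneous elements. -/
structure DGDifferential {R : Type*} [Ring R] (𝒜 : ℤ → AddSubgroup R) [GradedRing 𝒜] where
  d : R →+ R
  d_mem : ∀ (i : ℤ) (x : R), x ∈ 𝒜 i → d x ∈ 𝒜 (i + 1)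
  d_sq : ∀ x : R, d (d x) = 0
  leibniz : ∀ (i : ℤ) (a b : R), a ∈ 𝒜 i →
    d (a * b) = d a * b + ((-1 : ℤ) ^ i.natAbs) • (a * d b)

variable {R : Type*} [Ring R] (𝒜 : ℤ → AddSubgroup R) [GradedRing 𝒜]

/-- A two-sided dg-ideal: a two-sided ideal that is graded (closed under taking
homogeneous components) and closed under the differential. -/
def IsDGIdeal (D : DGDifferential 𝒜) (I : TwoSidedIdeal R) : Prop :=
  (∀ x ∈ I, ∀ i : ℤ, (DirectSum.decompose 𝒜 x i : R) ∈ I) ∧ (∀ x ∈ I, D.d x ∈ I)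

/-- A two-sided ideal `I` is nilpotent if `I ^ n = 0` for some `n ≥ 1`, i.e. every
product of `n` elements of `I` vanishes. -/
def IsNilpotentIdeal (I : TwoSidedIdeal R) : Prop :=
  ∃ n : ℕ, 0 < n ∧ ∀ l : List R, l.length = n → (∀ x ∈ l, x ∈ I) → l.prod = 0

open Classical in
/-- Extraction: if a list has at least `m` entries in a two-sided ideal `I`, its
product factors as a product of `m` elements of `I` times something. -/
lemma dgnil_extract (I : TwoSidedIdeal R) :
    ∀ (l : List R) (m : ℕ), m ≤ l.countP (fun x => decide (x ∈ I)) →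
      ∃ (g : List R) (t : R), g.length = m ∧ (∀ x ∈ g, x ∈ I) ∧ l.prod = g.prod * t := by
  intro l
  induction l with
  | nil =>
    intro m hm
    simp only [List.countP_nil, Nat.le_zero] at hm
    exact ⟨[], 1, by simp [hm]⟩
  | cons x l ih =>
    intro m hm
    by_cases hx : x ∈ I
    · cases m with
      | zero => exact ⟨[], (x :: l).prod, by simp⟩
      | succ k =>
        have hc : (x :: l).countP (fun x => decide (x ∈ I)) =
            l.countP (fun x => decide (x ∈ I)) + 1 :=
          List.countP_cons_of_pos (by simpa using hx)
        rw [hc] at hm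
        obtain ⟨g, t, hg1, hg2, hg3⟩ := ih k (by omega)
        refine ⟨x :: g, t, by simp [hg1], ?_, ?_⟩
        · intro z hz
          rcases List.mem_cons.1 hz with rfl | h
          · exact hx
          · exact hg2 z h
        · simp [List.prod_cons, hg3, mul_assoc]
    · have hc : (x :: l).countP (fun x => decide (x ∈ I)) =
          l.countP (fun x => decide (x ∈ I)) :=
        List.countP_cons_of_neg (by simpa using hx)
      rw [hc] at hm
      obtain ⟨g, t, hg1, hg2, hg3⟩ := ih m hm
      cases g with
      | nil =>
        refine ⟨[], x * t, by simpa using hg1, by simp, ?_⟩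
        simp only [List.prod_nil, one_mul] at hg3 ⊢
        simp [List.prod_cons, hg3, mul_assoc]
      | cons y g₂ =>
        refine ⟨(x * y) :: g₂, t, by simpa using hg1, ?_, ?_⟩
        · intro z hz
          rcases List.mem_cons.1 hz with rfl | h
          · exact I.mul_mem_left _ _ (hg2 y (by simp))
          · exact hg2 z (by simp [h])
        · simp only [List.prod_cons] at hg3 ⊢
          rw [hg3]
          simp [mul_assoc]

lemma dgnil_length_le_countP {α : Type*} (p q : α → Bool) :
    ∀ l : List α, (∀ x ∈ l, p x ∨ q x) → l.length ≤ l.countP p + l.countP q := by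
  intro l
  induction l with
  | nil => simp
  | cons a l ih =>
    intro h
    have h1 := ih (fun x hx => h x (List.mem_cons_of_mem a hx))
    have h2 := h a List.mem_cons_self
    simp only [List.countP_cons, List.length_cons]
    rcases h2 with h2 | h2 <;> simp [h2] <;> omega

lemma dgnil_sup_nilpotent (I J : TwoSidedIdeal R) (hI : IsNilpotentIdeal I)
    (hJ : IsNilpotentIdeal J) : IsNilpotentIdeal (I ⊔ J) := by
  classical
  obtain ⟨m, hm0, hm⟩ := hI
  obtain ⟨n, hn0, hn⟩ := hJ
  refine ⟨m + n, by omega, ?_⟩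
  have claim2 : ∀ k : List R, (∀ z ∈ k, z ∈ I ∨ z ∈ J) → k.length = m + n → k.prod = 0 := by
    intro k hk hlen
    by_cases hc : m ≤ k.countP (fun z => decide (z ∈ I))
    · obtain ⟨g, t, h1, h2, h3⟩ := dgnil_extract I k m hc
      rw [h3, hm g h1 h2, zero_mul]
    · have h4 : n ≤ k.countP (fun z => decide (z ∈ J)) := by
        have h5 := dgnil_length_le_countP (fun z => decide (z ∈ I)) (fun z => decide (z ∈ J))
          k (fun x hx => by
            rcases hk x hx with h | h
            · exact Or.inl (by simpa using h)
            · exact Or.inr (by simpa using h))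
        omega
      obtain ⟨g, t, h1, h2, h3⟩ := dgnil_extract J k n h4
      rw [h3, hn g h1 h2, zero_mul]
  have claim4 : ∀ l : List R, (∀ z ∈ l, ∃ x ∈ I, ∃ y ∈ J, x + y = z) →
      ∀ k : List R, (∀ z ∈ k, z ∈ I ∨ z ∈ J) → k.length + l.length = m + n →
        k.prod * l.prod = 0 := by
    intro l
    induction l with
    | nil =>
      intro _ k hk hlen
      rw [List.prod_nil, mul_one]
      exact claim2 k hk (by simpa using hlen)
    | cons z l ih =>
      intro hl k hk hlen
      obtain ⟨x, hx, y, hy, hz⟩ := hl z List.mem_cons_self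
      have e : k.prod * (z :: l).prod = (k ++ [x]).prod * l.prod + (k ++ [y]).prod * l.prod := by
        simp only [List.prod_cons, List.prod_append, List.prod_singleton, List.prod_nil, one_mul, mul_one, ← hz]
        noncomm_ring
      rw [e]
      have hmem : ∀ c : R, c ∈ I ∨ c ∈ J → ∀ z ∈ k ++ [c], z ∈ I ∨ z ∈ J := by
        intro c hc z hz
        rcases List.mem_append.1 hz with h | h
        · exact hk z h
        · rcases List.mem_singleton.1 h with rfl
          exact hc
      have hlen' : ∀ c : R, (k ++ [c]).length + l.length = m + n := by
        intro c
        simp only [List.length_append, List.length_singleton, List.length_cons,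
          List.length_nil] at hlen ⊢
        omega
      rw [ih (fun w hw => hl w (List.mem_cons_of_mem _ hw)) (k ++ [x]) (hmem x (Or.inl hx))
            (hlen' x),
          ih (fun w hw => hl w (List.mem_cons_of_mem _ hw)) (k ++ [y]) (hmem y (Or.inr hy))
            (hlen' y), add_zero]
  intro l hlen hl
  have hl' : ∀ z ∈ l, ∃ x ∈ I, ∃ y ∈ J, x + y = z := fun z hz =>
    TwoSidedIdeal.mem_sup.1 (hl z hz)
  have := claim4 l hl' [] (by simp) (by simpa using hlen)
  simpa using this

lemma dgnil_sup_dg (D : DGDifferential 𝒜) (I J : TwoSidedIdeal R) (hI : IsDGIdeal 𝒜 D I)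
    (hJ : IsDGIdeal 𝒜 D J) : IsDGIdeal 𝒜 D (I ⊔ J) := by
  constructor
  · intro x hx i
    obtain ⟨a, ha, b, hb, rfl⟩ := TwoSidedIdeal.mem_sup.1 hx
    have : (DirectSum.decompose 𝒜 (a + b) i : R) =
        (DirectSum.decompose 𝒜 a i : R) + (DirectSum.decompose 𝒜 b i : R) := by
      rw [DirectSum.decompose_add]
      simp
    rw [this]
    exact TwoSidedIdeal.add_mem _ (TwoSidedIdeal.mem_sup_left (hI.1 a ha i))
      (TwoSidedIdeal.mem_sup_right (hJ.1 b hb i))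
  · intro x hx
    obtain ⟨a, ha, b, hb, rfl⟩ := TwoSidedIdeal.mem_sup.1 hx
    rw [map_add]
    exact TwoSidedIdeal.add_mem _ (TwoSidedIdeal.mem_sup_left (hI.2 a ha))
      (TwoSidedIdeal.mem_sup_right (hJ.2 b hb))

lemma dgnil_bot_mem (D : DGDifferential 𝒜) :
    IsDGIdeal 𝒜 D (⊥ : TwoSidedIdeal R) ∧ IsNilpotentIdeal (⊥ : TwoSidedIdeal R) := by
  have hb : ∀ x : R, x ∈ (⊥ : TwoSidedIdeal R) ↔ x = 0 := fun x => TwoSidedIdeal.mem_bot R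
  refine ⟨⟨?_, ?_⟩, 1, one_pos, ?_⟩
  · intro x hx i
    rw [hb] at hx ⊢
    subst hx
    simp
  · intro x hx
    rw [hb] at hx ⊢
    subst hx
    simp
  · intro l hl hmem
    obtain ⟨a, rfl⟩ := List.length_eq_one_iff.1 hl
    have : a = 0 := (hb a).1 (hmem a (by simp))
    simp [this]

/-- if `(R, d)` is dg-Noetherian (every ascending chain of two-sided
dg-ideals stabilizes), then `dgnil(R, d)`, the sum of all nilpotent two-sided
dg-ideals, is itself a nilpotent two-sided dg-ideal. -/
theorem dgnil_nilpotent_of_dgNoetherian (D : DGDifferential 𝒜)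
    (hNoeth : ∀ f : ℕ →o TwoSidedIdeal R, (∀ n, IsDGIdeal 𝒜 D (f n)) →
      ∃ N : ℕ, ∀ n, N ≤ n → f n = f N) :
    IsDGIdeal 𝒜 D (sSup {I : TwoSidedIdeal R | IsDGIdeal 𝒜 D I ∧ IsNilpotentIdeal I}) ∧
      IsNilpotentIdeal (sSup {I : TwoSidedIdeal R | IsDGIdeal 𝒜 D I ∧ IsNilpotentIdeal I}) := by
  classical
  set S : Set (TwoSidedIdeal R) := {I | IsDGIdeal 𝒜 D I ∧ IsNilpotentIdeal I} with hS
  have hbot : (⊥ : TwoSidedIdeal R) ∈ S := dgnil_bot_mem 𝒜 D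
  have hmax : ∃ J ∈ S, ∀ I ∈ S, J ≤ I → I = J := by
    by_contra hcon
    push_neg at hcon
    have hstep : ∀ J : {I // I ∈ S}, ∃ I : {I // I ∈ S}, J.1 < I.1 := by
      intro J
      obtain ⟨I, hI, hle, hne⟩ := hcon J.1 J.2
      exact ⟨⟨I, hI⟩, lt_of_le_of_ne hle (Ne.symm hne)⟩
    choose next hnext using hstep
    let g : ℕ → {I // I ∈ S} := fun n => Nat.rec ⟨⊥, hbot⟩ (fun _ J => next J) n
    have hg : ∀ n, (g n).1 < (g (n + 1)).1 := fun n => hnext (g n)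
    let f : ℕ →o TwoSidedIdeal R :=
      ⟨fun n => (g n).1, monotone_nat_of_le_succ fun n => (hg n).le⟩
    obtain ⟨N, hN⟩ := hNoeth f (fun n => (g n).2.1)
    exact (hg N).ne' (hN (N + 1) (Nat.le_succ N))
  obtain ⟨J, hJmem, hJmax⟩ := hmax
  have hle : ∀ I ∈ S, I ≤ J := by
    intro I hI
    have hsup : I ⊔ J ∈ S :=
      ⟨dgnil_sup_dg 𝒜 D I J hI.1 hJmem.1, dgnil_sup_nilpotent I J hI.2 hJmem.2⟩
    have heq := hJmax (I ⊔ J) hsup le_sup_right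
    calc I ≤ I ⊔ J := le_sup_left
      _ = J := heq
  have hsSup : sSup S = J := le_antisymm (sSup_le hle) (le_sSup hJmem)
  rw [hsSup]
  exact hJmem
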